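/- The function Z₂(u) = (1/Γ(5/4)) · ₁F₃(−1/4; 1/4, 1/2, 3/4; u⁴/256) − u/√2 + (u³/(6√2 Γ(1/2))) · ₁F₃(1/2; 5/4, 3/2, 7/4; u⁴/256) satisfies the fourth-order linear ordinary differential equation Z⁗(u) − (1/4) u Z′(u) + (1/4) Z(u) = 0 for every u ∈ ℝ. -/

import Mathlib

/-- Pochhammer symbol (rising factorial) `(a)_k = a(a+1)⋯(a+k-1)`. -/
noncomputable def poch (a : ℝ) (k : ℕ) : ℝ := ∏ i ∈ Finset.range k, (a + (i : ℝ))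

/-- Generalized hypergeometric function `₁F₃(a; b₁, b₂, b₃; z)`. -/
noncomputable def F13 (a b₁ b₂ b₃ z : ℝ) : ℝ :=
  ∑' k : ℕ, poch a k / (poch b₁ k * poch b₂ k * poch b₃ k) * z ^ k / (Nat.factorial k)

/-- The similarity solution `Z₂` of Mullins' equation. -/
noncomputable def Z₂ (u : ℝ) : ℝ :=
  1 / Real.Gamma (5/4) * F13 (-1/4) (1/4) (1/2) (3/4) (u ^ 4 / 256)
  - u / Real.sqrt 2
  + u ^ 3 / (6 * Real.sqrt 2 * Real.Gamma (1/2)) * F13 (1/2) (5/4) (3/2) (7/4) (u ^ 4 / 256)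

namespace ZODE

open FormalMultilinearSeries

noncomputable def hterm (a b₁ b₂ b₃ z : ℝ) (k : ℕ) : ℝ :=
  poch a k / (poch b₁ k * poch b₂ k * poch b₃ k) * z ^ k / (Nat.factorial k)

lemma F13_eq (a b₁ b₂ b₃ z : ℝ) : F13 a b₁ b₂ b₃ z = ∑' k, hterm a b₁ b₂ b₃ z k := rfl

lemma poch_pos {b : ℝ} (hb : 0 < b) (k : ℕ) : 0 < poch b k :=
  Finset.prod_pos fun i _ => by positivity

lemma poch_succ (a : ℝ) (k : ℕ) : poch a (k+1) = poch a k * (a + k) :=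
  Finset.prod_range_succ _ _

lemma hterm_succ {a b₁ b₂ b₃ : ℝ} (hb₁ : 0 < b₁) (hb₂ : 0 < b₂) (hb₃ : 0 < b₃) (z : ℝ) (k : ℕ) :
    hterm a b₁ b₂ b₃ z (k+1)
      = hterm a b₁ b₂ b₃ z k * ((a + k) * z / ((b₁ + k) * (b₂ + k) * (b₃ + k) * (k+1))) := by
  have h1 := (poch_pos hb₁ k).ne'
  have h2 := (poch_pos hb₂ k).ne'
  have h3 := (poch_pos hb₃ k).ne'
  have h1' : b₁ + (k:ℝ) ≠ 0 := by positivity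
  have h2' : b₂ + (k:ℝ) ≠ 0 := by positivity
  have h3' : b₃ + (k:ℝ) ≠ 0 := by positivity
  have hk : ((k:ℝ)+1) ≠ 0 := by positivity
  have hf : ((k.factorial : ℝ)) ≠ 0 := by positivity
  simp only [hterm, poch_succ, pow_succ, Nat.factorial_succ]
  push_cast
  field_simp

lemma summable_hterm_abs {a b₁ b₂ b₃ : ℝ} (hb₁ : 0 < b₁) (hb₂ : 0 < b₂) (hb₃ : 0 < b₃) (z : ℝ) :
    Summable (fun k => |hterm a b₁ b₂ b₃ z k|) := by
  apply summable_of_ratio_norm_eventually_le (r := 1/2) (by norm_num)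
  have hN : ∀ᶠ (k : ℕ) in Filter.atTop, (2 * (|a| + 1) * (|z| + 1) : ℝ) ≤ (k:ℝ) := by
    exact (tendsto_natCast_atTop_atTop (R := ℝ)).eventually_ge_atTop _
  filter_upwards [hN, Filter.eventually_ge_atTop 1] with k hk hk1
  have hk1' : (1:ℝ) ≤ (k:ℝ) := by exact_mod_cast hk1
  rw [Real.norm_eq_abs, Real.norm_eq_abs, abs_abs, abs_abs, hterm_succ hb₁ hb₂ hb₃, abs_mul]
  have hterm_nonneg : (0:ℝ) ≤ |hterm a b₁ b₂ b₃ z k| := abs_nonneg _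
  have key : |(a + k) * z / ((b₁ + k) * (b₂ + k) * (b₃ + k) * (k+1))| ≤ 1/2 := by
    rw [abs_div, abs_mul]
    have hd : |(b₁ + (k:ℝ)) * (b₂ + k) * (b₃ + k) * (k+1)|
        = (b₁ + (k:ℝ)) * (b₂ + k) * (b₃ + k) * (k+1) := by
      apply abs_of_pos; positivity
    rw [hd, div_le_iff₀ (by positivity)]
    have h1 : |a + (k:ℝ)| ≤ (|a| + 1) * k := by
      have : |a + (k:ℝ)| ≤ |a| + |(k:ℝ)| := abs_add_le _ _
      rw [Nat.abs_cast] at this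
      nlinarith [abs_nonneg a]
    have h2 : |z| ≤ |z| + 1 := by linarith
    have hb1k : (k:ℝ) ≤ b₁ + k := by linarith
    have hb2k : (k:ℝ) ≤ b₂ + k := by linarith
    have hb3k : (k:ℝ) ≤ b₃ + k := by linarith
    have p1 : (k:ℝ)*k ≤ (b₁+k)*(b₂+k) := mul_le_mul hb1k hb2k (by positivity) (by positivity)
    have p2 : (1:ℝ) ≤ (b₃+(k:ℝ))*((k:ℝ)+1) := by nlinarith
    have p3 : (k:ℝ)*k*1 ≤ ((b₁+k)*(b₂+k))*((b₃+(k:ℝ))*((k:ℝ)+1)) :=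
      mul_le_mul p1 p2 (by norm_num) (by positivity)
    calc |a + (k:ℝ)| * |z| ≤ ((|a| + 1) * k) * (|z| + 1) := by
          apply mul_le_mul h1 h2 (abs_nonneg z) (by positivity)
      _ = ((|a| + 1) * (|z| + 1)) * k := by ring
      _ ≤ ((k:ℝ)/2) * k := mul_le_mul_of_nonneg_right (by linarith) (by positivity)
      _ = 1/2 * ((k:ℝ)*k*1) := by ring
      _ ≤ 1/2 * ((b₁ + k) * (b₂ + k) * (b₃ + k) * (k+1)) := by nlinarith [p3]
  calc |hterm a b₁ b₂ b₃ z k| * |(a + k) * z / ((b₁ + k) * (b₂ + k) * (b₃ + k) * (k+1))|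
      ≤ |hterm a b₁ b₂ b₃ z k| * (1/2) := mul_le_mul_of_nonneg_left key hterm_nonneg
    _ = 1/2 * |hterm a b₁ b₂ b₃ z k| := by ring

noncomputable def D (c : ℕ → ℝ) : ℕ → ℝ := fun n => ((n:ℝ)+1) * c (n+1)

lemma deriv_step {f : ℝ → ℝ} {c : ℕ → ℝ}
    (hp : HasFPowerSeriesOnBall f (ofScalars ℝ c) 0 ⊤) :
    HasFPowerSeriesOnBall (deriv f) (ofScalars ℝ (D c)) 0 ⊤ := by
  have h1 := hp.fderiv
  have h2 := (ContinuousLinearMap.apply ℝ ℝ (1:ℝ)).comp_hasFPowerSeriesOnBall h1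
  have hfun : (ContinuousLinearMap.apply ℝ ℝ (1:ℝ)) ∘ (fderiv ℝ f) = deriv f := by
    funext y
    simp [ContinuousLinearMap.apply_apply, fderiv_apply_one_eq_deriv]
  have hser : (ContinuousLinearMap.apply ℝ ℝ (1:ℝ)).compFormalMultilinearSeries
      ((ofScalars ℝ c).derivSeries) = ofScalars ℝ (D c) := by
    funext n
    refine ContinuousMultilinearMap.ext fun m => ?_
    have hm : m = fun i => m i • (1:ℝ) := by funext i; simp
    rw [ContinuousLinearMap.compFormalMultilinearSeries_apply,
      ContinuousLinearMap.compContinuousMultilinearMap_coe]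
    simp only [Function.comp_apply, ContinuousLinearMap.apply_apply]
    rw [hm, ContinuousMultilinearMap.map_smul_univ, ContinuousMultilinearMap.map_smul_univ]
    simp only [ContinuousLinearMap.smul_apply, smul_eq_mul]
    congr 1
    have := derivSeries_apply_diag (ofScalars ℝ c) n (1:ℝ)
    rw [this]
    simp [ofScalars, D, ContinuousMultilinearMap.smul_apply,
      ContinuousMultilinearMap.mkPiAlgebraFin_apply]
  rw [← hfun, ← hser]
  exact h2

noncomputable def aseq (k : ℕ) : ℝ :=
  poch (-1/4) k / (poch (1/4) k * poch (1/2) k * poch (3/4) k) / 256 ^ k / (Nat.factorial k)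

noncomputable def bseq (k : ℕ) : ℝ :=
  poch (1/2) k / (poch (5/4) k * poch (3/2) k * poch (7/4) k) / 256 ^ k / (Nat.factorial k)

lemma aseq_rec (k : ℕ) :
    ((4*(k:ℝ)+1) * (4*k+2) * (4*k+3) * (4*k+4)) * aseq (k+1) = ((4*(k:ℝ))-1)/4 * aseq k := by
  have h1 := (poch_pos (by norm_num : (0:ℝ) < 1/4) k).ne'
  have h2 := (poch_pos (by norm_num : (0:ℝ) < 1/2) k).ne'
  have h3 := (poch_pos (by norm_num : (0:ℝ) < 3/4) k).ne'
  have hf : ((Nat.factorial k : ℝ)) ≠ 0 := by positivity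
  have hp : ((256:ℝ) ^ k) ≠ 0 := by positivity
  have e1 : (1/4 : ℝ) + k ≠ 0 := by positivity
  have e2 : (1/2 : ℝ) + k ≠ 0 := by positivity
  have e3 : (3/4 : ℝ) + k ≠ 0 := by positivity
  have ek : ((k:ℝ)+1) ≠ 0 := by positivity
  simp only [aseq, poch_succ, pow_succ, Nat.factorial_succ]
  push_cast
  field_simp
  ring

lemma bseq_rec (k : ℕ) :
    ((4*(k:ℝ)+4) * (4*k+5) * (4*k+6) * (4*k+7)) * bseq (k+1) = ((4*(k:ℝ)+2))/4 * bseq k := by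
  have h1 := (poch_pos (by norm_num : (0:ℝ) < 5/4) k).ne'
  have h2 := (poch_pos (by norm_num : (0:ℝ) < 3/2) k).ne'
  have h3 := (poch_pos (by norm_num : (0:ℝ) < 7/4) k).ne'
  have hf : ((Nat.factorial k : ℝ)) ≠ 0 := by positivity
  have hp : ((256:ℝ) ^ k) ≠ 0 := by positivity
  have e1 : (5/4 : ℝ) + k ≠ 0 := by positivity
  have e2 : (3/2 : ℝ) + k ≠ 0 := by positivity
  have e3 : (7/4 : ℝ) + k ≠ 0 := by positivity
  have ek : ((k:ℝ)+1) ≠ 0 := by positivity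
  simp only [bseq, poch_succ, pow_succ, Nat.factorial_succ]
  push_cast
  field_simp
  ring

noncomputable def A : ℝ := 1 / Real.Gamma (5/4)
noncomputable def B : ℝ := 1 / (6 * Real.sqrt 2 * Real.Gamma (1/2))

noncomputable def cseq (n : ℕ) : ℝ :=
  (if n % 4 = 0 then A * aseq (n / 4) else 0)
  + (if n = 1 then -(1 / Real.sqrt 2) else 0)
  + (if n % 4 = 3 then B * bseq (n / 4) else 0)

lemma cseq_rec (n : ℕ) :
    ((n:ℝ)+1) * ((n:ℝ)+2) * ((n:ℝ)+3) * ((n:ℝ)+4) * cseq (n+4) = ((n:ℝ)-1)/4 * cseq n := by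
  have hm : (n+4) % 4 = n % 4 := by omega
  have hd : (n+4) / 4 = n / 4 + 1 := by omega
  have hne : n + 4 ≠ 1 := by omega
  rcases (by omega : n % 4 = 0 ∨ n % 4 = 1 ∨ n % 4 = 2 ∨ n % 4 = 3) with h | h | h | h
  · have hn : n = 4 * (n / 4) := by omega
    set q := n / 4 with hq
    have hcast : (n:ℝ) = 4 * (q:ℝ) := by rw [hn]; push_cast; ring
    have hn1 : n ≠ 1 := by omega
    simp only [cseq, hm, hd, h, if_neg hne, if_neg hn1]
    norm_num
    rw [hcast, ← hq]
    linear_combination A * aseq_rec q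
  · have hz4 : ¬ (n+4) % 4 = 0 := by omega
    have hz3 : ¬ (n+4) % 4 = 3 := by omega
    have hz0 : ¬ n % 4 = 0 := by omega
    have hz3' : ¬ n % 4 = 3 := by omega
    simp only [cseq, if_neg hz4, if_neg hz3, if_neg hne, if_neg hz0, if_neg hz3']
    by_cases h1 : n = 1
    · subst h1; norm_num
    · rw [if_neg h1]; ring
  · have hz4 : ¬ (n+4) % 4 = 0 := by omega
    have hz3 : ¬ (n+4) % 4 = 3 := by omega
    simp only [cseq, if_neg hz4, if_neg hz3, if_neg hne,
      if_neg (by omega : ¬ n % 4 = 0), if_neg (by omega : n ≠ 1), if_neg (by omega : ¬ n % 4 = 3)]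
    ring
  · have hn : n = 4 * (n / 4) + 3 := by omega
    set q := n / 4 with hq
    have hcast : (n:ℝ) = 4 * (q:ℝ) + 3 := by rw [hn]; push_cast; ring
    have hn1 : n ≠ 1 := by omega
    simp only [cseq, hm, hd, h, if_neg hne, if_neg hn1]
    norm_num
    rw [hcast, ← hq]
    linear_combination B * bseq_rec q

lemma aseq_hterm (y : ℝ) (k : ℕ) :
    aseq k * y ^ (4*k) = hterm (-1/4) (1/4) (1/2) (3/4) (y^4/256) k := by
  simp only [aseq, hterm, div_pow, ← pow_mul]
  ring

lemma bseq_hterm (y : ℝ) (k : ℕ) :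
    bseq k * y ^ (4*k) = hterm (1/2) (5/4) (3/2) (7/4) (y^4/256) k := by
  simp only [bseq, hterm, div_pow, ← pow_mul]
  ring

lemma inj4 : Function.Injective (fun k : ℕ => 4 * k) := fun a b h => by
  simpa using h

lemma inj43 : Function.Injective (fun k : ℕ => 4 * k + 3) := fun a b h => by
  simp only at h; omega

lemma hasSum_cseq (y : ℝ) : HasSum (fun n => cseq n * y ^ n) (Z₂ y) := by
  -- piece 1
  have s1 : Summable (fun k => hterm (-1/4) (1/4) (1/2) (3/4) (y^4/256) k) :=
    (summable_hterm_abs (by norm_num) (by norm_num) (by norm_num) _).of_abs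
  have hs1 : HasSum (fun k => hterm (-1/4) (1/4) (1/2) (3/4) (y^4/256) k)
      (F13 (-1/4) (1/4) (1/2) (3/4) (y^4/256)) := by
    rw [F13_eq]; exact s1.hasSum
  have hs1' : HasSum (fun k => (A * aseq k) * y ^ (4*k))
      (A * F13 (-1/4) (1/4) (1/2) (3/4) (y^4/256)) := by
    have h := hs1.mul_left A
    have he : (fun k => (A * aseq k) * y ^ (4*k))
        = fun k => A * hterm (-1/4) (1/4) (1/2) (3/4) (y^4/256) k := by
      funext k; rw [mul_assoc, aseq_hterm]
    rw [he]; exact h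
  have hf1 : HasSum (fun n => (if n % 4 = 0 then A * aseq (n/4) else 0) * y ^ n)
      (A * F13 (-1/4) (1/4) (1/2) (3/4) (y^4/256)) := by
    rw [← Function.Injective.hasSum_iff inj4 ?_]
    · have he : ((fun n => (if n % 4 = 0 then A * aseq (n/4) else 0) * y ^ n) ∘ (fun k => 4 * k))
          = fun k => (A * aseq k) * y ^ (4*k) := by
        funext k
        simp [Function.comp, Nat.mul_mod_right, Nat.mul_div_cancel_left]
      rw [he]; exact hs1'
    · intro x hx
      have : ¬ x % 4 = 0 := by
        intro h0
        exact hx ⟨x / 4, by show 4 * (x / 4) = x; omega⟩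
      simp [this]
  -- piece 2
  have hf2 : HasSum (fun n => (if n = 1 then -(1 / Real.sqrt 2) else 0) * y ^ n)
      (-(1 / Real.sqrt 2) * y) := by
    have he : (fun n => (if n = 1 then -(1 / Real.sqrt 2) else 0) * y ^ n)
        = fun n => if n = 1 then -(1 / Real.sqrt 2) * y else 0 := by
      funext n
      by_cases h : n = 1 <;> simp [h]
    rw [he]
    exact hasSum_ite_eq 1 _
  -- piece 3
  have s3 : Summable (fun k => hterm (1/2) (5/4) (3/2) (7/4) (y^4/256) k) :=
    (summable_hterm_abs (by norm_num) (by norm_num) (by norm_num) _).of_abs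
  have hs3 : HasSum (fun k => hterm (1/2) (5/4) (3/2) (7/4) (y^4/256) k)
      (F13 (1/2) (5/4) (3/2) (7/4) (y^4/256)) := by
    rw [F13_eq]; exact s3.hasSum
  have hs3' : HasSum (fun k => (B * bseq k) * y ^ (4*k+3))
      ((B * y^3) * F13 (1/2) (5/4) (3/2) (7/4) (y^4/256)) := by
    have h := hs3.mul_left (B * y^3)
    have he : (fun k => (B * bseq k) * y ^ (4*k+3))
        = fun k => (B * y^3) * hterm (1/2) (5/4) (3/2) (7/4) (y^4/256) k := by
      funext k
      rw [← bseq_hterm y k, pow_add]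
      ring
    rw [he]; exact h
  have hf3 : HasSum (fun n => (if n % 4 = 3 then B * bseq (n/4) else 0) * y ^ n)
      ((B * y^3) * F13 (1/2) (5/4) (3/2) (7/4) (y^4/256)) := by
    rw [← Function.Injective.hasSum_iff inj43 ?_]
    · have he : ((fun n => (if n % 4 = 3 then B * bseq (n/4) else 0) * y ^ n) ∘ (fun k => 4 * k + 3))
          = fun k => (B * bseq k) * y ^ (4*k+3) := by
        funext k
        have h1 : (4 * k + 3) % 4 = 3 := by omega
        have h2 : (4 * k + 3) / 4 = k := by omega
        simp [Function.comp, h1, h2]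
      rw [he]; exact hs3'
    · intro x hx
      have : ¬ x % 4 = 3 := by
        intro h0
        exact hx ⟨x / 4, by show 4 * (x / 4) + 3 = x; omega⟩
      simp [this]
  have htot := (hf1.add hf2).add hf3
  have he : (fun n => ((if n % 4 = 0 then A * aseq (n/4) else 0) * y ^ n
        + (if n = 1 then -(1 / Real.sqrt 2) else 0) * y ^ n)
        + (if n % 4 = 3 then B * bseq (n/4) else 0) * y ^ n)
      = fun n => cseq n * y ^ n := by
    funext n
    simp only [cseq]
    ring
  rw [he] at htot
  have hv : A * F13 (-1/4) (1/4) (1/2) (3/4) (y^4/256) + -(1 / Real.sqrt 2) * y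
      + (B * y^3) * F13 (1/2) (5/4) (3/2) (7/4) (y^4/256) = Z₂ y := by
    simp only [Z₂, A, B]
    ring
  rwa [hv] at htot

lemma radius_top : (ofScalars ℝ cseq).radius = ⊤ := by
  apply FormalMultilinearSeries.radius_eq_top_of_summable_norm
  intro r
  have hr : (0:ℝ) ≤ (r:ℝ) := r.coe_nonneg
  simp only [FormalMultilinearSeries.ofScalars_norm]
  have S1 : Summable (fun n => |if n % 4 = 0 then A * aseq (n/4) else 0| * (r:ℝ) ^ n) := by
    rw [← Function.Injective.summable_iff inj4 ?_]
    · have he : ((fun n => |if n % 4 = 0 then A * aseq (n/4) else 0| * (r:ℝ) ^ n)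
          ∘ (fun k => 4 * k))
          = fun k => |A| * |hterm (-1/4) (1/4) (1/2) (3/4) ((r:ℝ)^4/256) k| := by
        funext k
        have h1 : (4 * k) % 4 = 0 := by omega
        have h2 : (4 * k) / 4 = k := by omega
        simp only [Function.comp, h1, h2, if_pos]
        rw [← aseq_hterm (r:ℝ) k, abs_mul, abs_mul, abs_of_nonneg (pow_nonneg hr _)]
        ring
      rw [he]
      exact ((summable_hterm_abs (by norm_num) (by norm_num) (by norm_num) _).mul_left _)
    · intro x hx
      have : ¬ x % 4 = 0 := fun h0 => hx ⟨x / 4, by show 4 * (x / 4) = x; omega⟩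
      simp [this]
  have S2 : Summable (fun n => |if n = 1 then -(1 / Real.sqrt 2) else 0| * (r:ℝ) ^ n) := by
    have he : (fun n => |if n = 1 then -(1 / Real.sqrt 2) else 0| * (r:ℝ) ^ n)
        = fun n => if n = 1 then |(-(1 / Real.sqrt 2))| * (r:ℝ) else 0 := by
      funext n
      by_cases h : n = 1 <;> simp [h]
    rw [he]
    exact (hasSum_ite_eq 1 _).summable
  have S3 : Summable (fun n => |if n % 4 = 3 then B * bseq (n/4) else 0| * (r:ℝ) ^ n) := by
    rw [← Function.Injective.summable_iff inj43 ?_]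
    · have he : ((fun n => |if n % 4 = 3 then B * bseq (n/4) else 0| * (r:ℝ) ^ n)
          ∘ (fun k => 4 * k + 3))
          = fun k => (|B| * (r:ℝ)^3) * |hterm (1/2) (5/4) (3/2) (7/4) ((r:ℝ)^4/256) k| := by
        funext k
        have h1 : (4 * k + 3) % 4 = 3 := by omega
        have h2 : (4 * k + 3) / 4 = k := by omega
        simp only [Function.comp, h1, h2, if_pos]
        rw [← bseq_hterm (r:ℝ) k, abs_mul, abs_mul, abs_of_nonneg (pow_nonneg hr _), pow_add]
        ring
      rw [he]
      exact ((summable_hterm_abs (by norm_num) (by norm_num) (by norm_num) _).mul_left _)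
    · intro x hx
      have : ¬ x % 4 = 3 := fun h0 => hx ⟨x / 4, by show 4 * (x / 4) + 3 = x; omega⟩
      simp [this]
  apply Summable.of_nonneg_of_le (fun n => by positivity) (fun n => ?_) ((S1.add S2).add S3)
  have habs : ‖cseq n‖ ≤ |if n % 4 = 0 then A * aseq (n/4) else 0|
      + |if n = 1 then -(1 / Real.sqrt 2) else 0|
      + |if n % 4 = 3 then B * bseq (n/4) else 0| := by
    rw [Real.norm_eq_abs, cseq]
    exact (abs_add_le _ _).trans (add_le_add_left (abs_add_le _ _) _)
  calc ‖cseq n‖ * (r:ℝ) ^ n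
      ≤ (|if n % 4 = 0 then A * aseq (n/4) else 0|
        + |if n = 1 then -(1 / Real.sqrt 2) else 0|
        + |if n % 4 = 3 then B * bseq (n/4) else 0|) * (r:ℝ) ^ n :=
        mul_le_mul_of_nonneg_right habs (by positivity)
    _ = |if n % 4 = 0 then A * aseq (n/4) else 0| * (r:ℝ) ^ n
        + |if n = 1 then -(1 / Real.sqrt 2) else 0| * (r:ℝ) ^ n
        + |if n % 4 = 3 then B * bseq (n/4) else 0| * (r:ℝ) ^ n := by ring

lemma hp_Z₂ : HasFPowerSeriesOnBall Z₂ (ofScalars ℝ cseq) 0 ⊤ := by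
  refine ⟨by rw [radius_top], by simp, fun {y} _ => ?_⟩
  have := hasSum_cseq y
  rw [zero_add]
  simpa only [FormalMultilinearSeries.ofScalars_apply_eq, smul_eq_mul] using this

lemma hval {f : ℝ → ℝ} {c : ℕ → ℝ} (hp : HasFPowerSeriesOnBall f (ofScalars ℝ c) 0 ⊤) (u : ℝ) :
    HasSum (fun n => c n * u ^ n) (f u) := by
  have h := hp.hasSum (y := u) (by simp)
  rw [zero_add] at h
  simpa only [FormalMultilinearSeries.ofScalars_apply_eq, smul_eq_mul] using h

lemma D4_eq (c : ℕ → ℝ) (n : ℕ) :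
    D (D (D (D c))) n = ((n:ℝ)+1) * ((n:ℝ)+2) * ((n:ℝ)+3) * ((n:ℝ)+4) * c (n+4) := by
  simp only [D]
  push_cast
  ring

end ZODE

/-- `Z₂` satisfies the similarity ODE `Z⁗(u) - (1/4) u Z'(u) + (1/4) Z(u) = 0` on all of `ℝ`. -/
theorem Z₂_satisfies_similarity_ODE (u : ℝ) :
    iteratedDeriv 4 Z₂ u - 1/4 * u * deriv Z₂ u + 1/4 * Z₂ u = 0 := by
  open ZODE in
  have hp := hp_Z₂
  have hp1 := deriv_step hp
  have hp2 := deriv_step hp1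
  have hp3 := deriv_step hp2
  have hp4 := deriv_step hp3
  have h0 := hval hp u
  have h1 := hval hp1 u
  have h4 := hval hp4 u
  have hnc : HasSum (fun n : ℕ => (n:ℝ) * cseq n * u ^ n) (u * deriv Z₂ u) := by
    have hm := h1.mul_left u
    rw [← Function.Injective.hasSum_iff Nat.succ_injective ?_]
    · have he : ((fun n : ℕ => (n:ℝ) * cseq n * u ^ n) ∘ Nat.succ)
          = fun m => u * (D cseq m * u ^ m) := by
        funext m
        simp only [Function.comp, Nat.succ_eq_add_one, D]
        push_cast
        ring
      rw [he]; exact hm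
    · intro x hx
      match x with
      | 0 => simp
      | n + 1 => exact absurd ⟨n, rfl⟩ hx
  have hcomb : HasSum (fun n : ℕ => ((n:ℝ)-1)/4 * cseq n * u ^ n)
      (1/4 * (u * deriv Z₂ u) - 1/4 * Z₂ u) := by
    have h := (hnc.sub h0).mul_left (1/4)
    have he : (fun n : ℕ => ((n:ℝ)-1)/4 * cseq n * u ^ n)
        = fun n : ℕ => 1/4 * ((n:ℝ) * cseq n * u ^ n - cseq n * u ^ n) := by
      funext n; ring
    rw [he, show (1:ℝ)/4 * (u * deriv Z₂ u) - 1/4 * Z₂ u = 1/4 * (u * deriv Z₂ u - Z₂ u) by ring]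
    exact h
  have h4' : HasSum (fun n : ℕ => ((n:ℝ)-1)/4 * cseq n * u ^ n)
      (deriv (deriv (deriv (deriv Z₂))) u) := by
    have he : (fun n => D (D (D (D cseq))) n * u ^ n)
        = fun n : ℕ => ((n:ℝ)-1)/4 * cseq n * u ^ n := by
      funext n
      rw [D4_eq, cseq_rec]
    rw [← he]
    exact h4
  have hval4 : deriv (deriv (deriv (deriv Z₂))) u
      = 1/4 * (u * deriv Z₂ u) - 1/4 * Z₂ u := h4'.unique hcomb
  have hit : iteratedDeriv 4 Z₂ = deriv (deriv (deriv (deriv Z₂))) := by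
    rw [iteratedDeriv_eq_iterate]
    rfl
  rw [hit, hval4]
  ring
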